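/- Chain rule upper estimate: let S₁ : ℝ^n ⇉ ℝ^m, S₂ : ℝ^m ⇉ ℝ^s be osc, S = S₂ ∘ S₁, (x̄, z̄) ∈ gph S, Ξ(x,z) = S₁(x) ∩ S₂^{-1}(z). If Ξ is inner calm* at (x̄, z̄) wrt dom Ξ in the fuzzy sense, then DS(x̄, z̄)(u) ⊆ ⋃_{ȳ ∈ Ξ(x̄, z̄)} (DS₂(ȳ, z̄) ∘ DS₁(x̄, ȳ))(u) for every u, i.e., for every w ∈ DS(x̄, z̄)(u) there exist ȳ ∈ S₁(x̄) with z̄ ∈ S₂(ȳ) and v with (u, v) ∈ T_{gph S₁}(x̄, ȳ) and (v, w) ∈ T_{gph S₂}(ȳ, z̄). -/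
import Mathlib
open Filter Topology

/-- The tangent (contingent) cone to `Ω` at `x`. -/
def SeqTangent {E : Type*} [NormedAddCommGroup E] [NormedSpace ℝ E]
    (Ω : Set E) (x : E) : Set E :=
  {u | ∃ t : ℕ → ℝ, ∃ w : ℕ → E, (∀ k, 0 < t k) ∧ Tendsto t atTop (𝓝 0) ∧
    Tendsto w atTop (𝓝 u) ∧ ∀ k, x + t k • w k ∈ Ω}


lemma seqTangent_smul {E : Type*} [NormedAddCommGroup E] [NormedSpace ℝ E]
    {Ω : Set E} {x p : E} (hp : p ∈ SeqTangent Ω x) {c : ℝ} (hc : 0 < c) :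
    c • p ∈ SeqTangent Ω x := by
  obtain ⟨t, w, ht, ht0, hw, hmem⟩ := hp
  refine ⟨fun k => c⁻¹ * t k, fun k => c • w k, fun k => mul_pos (inv_pos.2 hc) (ht k),
    by simpa using ht0.const_mul c⁻¹, hw.const_smul c, fun k => ?_⟩
  simp only []
  rw [smul_smul, mul_comm c⁻¹ (t k), mul_assoc, inv_mul_cancel₀ hc.ne', mul_one]
  exact hmem k

lemma zero_mem_seqTangent {E : Type*} [NormedAddCommGroup E] [NormedSpace ℝ E]
    {Ω : Set E} {x : E} (hx : x ∈ Ω) : (0 : E) ∈ SeqTangent Ω x :=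
  ⟨fun k => ((k : ℝ) + 1)⁻¹, fun _ => 0, fun k => by positivity,
    tendsto_one_div_add_atTop_nhds_zero_nat.congr (by simp [one_div]),
    tendsto_const_nhds, fun k => by simpa using hx⟩

/-- The sequence `y` converges to `yb` from direction `v`. -/
def ConvFromDir {E : Type*} [NormedAddCommGroup E] [NormedSpace ℝ E]
    (yb v : E) (y : ℕ → E) : Prop :=
  ∃ t : ℕ → ℝ, ∃ w : ℕ → E, (∀ k, 0 < t k) ∧ Tendsto t atTop (𝓝 0) ∧
    Tendsto w atTop (𝓝 v) ∧ ∀ k, y k = yb + t k • w k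

/-- `S` is inner calm* at `yb` wrt `Ω` in direction `v` in the fuzzy sense. -/
def FuzzyInnerCalmStarDirAt {E F : Type*} [NormedAddCommGroup E] [NormedSpace ℝ E]
    [NormedAddCommGroup F]
    (S : E → Set F) (Ω : Set E) (yb : E) (v : E) : Prop :=
  v ∉ SeqTangent Ω yb ∨
    ∃ κ : ℝ, 0 < κ ∧ ∃ y : ℕ → E, (∀ k, y k ∈ Ω) ∧ ConvFromDir yb v y ∧
      ∃ x : ℕ → F, ∃ xb : F, (∀ k, x k ∈ S (y k)) ∧
        ∀ k, ‖x k - xb‖ ≤ κ * ‖y k - yb‖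

/-- `S` is inner calm* at `yb` wrt `Ω` in the fuzzy sense. -/
def FuzzyInnerCalmStarAt {E F : Type*} [NormedAddCommGroup E] [NormedSpace ℝ E]
    [NormedAddCommGroup F]
    (S : E → Set F) (Ω : Set E) (yb : E) : Prop :=
  ∀ v : E, ‖v‖ = 1 → FuzzyInnerCalmStarDirAt S Ω yb v

/-- Chain rule, upper estimate: if the intermediate map `Ξ(x, z) = S₁(x) ∩ S₂⁻¹(z)`
is inner calm* at `(xb, zb)` wrt `dom Ξ = gph S` in the fuzzy sense, then
`DS(xb, zb)(u) ⊆ ⋃_{yb ∈ Ξ(xb, zb)} (DS₂(yb, zb) ∘ DS₁(xb, yb))(u)`. -/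
theorem stmt_14 {n m s : ℕ}
    (S1 : EuclideanSpace ℝ (Fin n) → Set (EuclideanSpace ℝ (Fin m)))
    (S2 : EuclideanSpace ℝ (Fin m) → Set (EuclideanSpace ℝ (Fin s)))
    (h1 : IsClosed {p : EuclideanSpace ℝ (Fin n) × EuclideanSpace ℝ (Fin m) | p.2 ∈ S1 p.1})
    (h2 : IsClosed {p : EuclideanSpace ℝ (Fin m) × EuclideanSpace ℝ (Fin s) | p.2 ∈ S2 p.1})
    (xb : EuclideanSpace ℝ (Fin n)) (zb : EuclideanSpace ℝ (Fin s))
    (hxz : ∃ y ∈ S1 xb, zb ∈ S2 y)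
    (hic : FuzzyInnerCalmStarAt
      (fun p : EuclideanSpace ℝ (Fin n) × EuclideanSpace ℝ (Fin s) =>
        {y | y ∈ S1 p.1 ∧ p.2 ∈ S2 y})
      {p : EuclideanSpace ℝ (Fin n) × EuclideanSpace ℝ (Fin s) | ∃ y ∈ S1 p.1, p.2 ∈ S2 y}
      (xb, zb)) :
    ∀ (u : EuclideanSpace ℝ (Fin n)) (w : EuclideanSpace ℝ (Fin s)),
      ((u, w) : _ × _) ∈
        SeqTangent {p : EuclideanSpace ℝ (Fin n) × EuclideanSpace ℝ (Fin s) |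
          ∃ y ∈ S1 p.1, p.2 ∈ S2 y} (xb, zb) →
      ∃ yb : EuclideanSpace ℝ (Fin m), yb ∈ S1 xb ∧ zb ∈ S2 yb ∧
        ∃ v : EuclideanSpace ℝ (Fin m),
          ((u, v) : _ × _) ∈
            SeqTangent {p : EuclideanSpace ℝ (Fin n) × EuclideanSpace ℝ (Fin m) |
              p.2 ∈ S1 p.1} (xb, yb) ∧
          ((v, w) : _ × _) ∈
            SeqTangent {p : EuclideanSpace ℝ (Fin m) × EuclideanSpace ℝ (Fin s) |
              p.2 ∈ S2 p.1} (yb, zb) := by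

  intro u w hw
  by_cases h0 : ((u, w) : _ × _) = (0 : _ × _)
  · obtain ⟨yb, hy1, hy2⟩ := hxz
    have hu : u = 0 := congrArg Prod.fst h0
    have hw0 : w = 0 := congrArg Prod.snd h0
    refine ⟨yb, hy1, hy2, 0, ?_, ?_⟩
    · rw [hu]; exact zero_mem_seqTangent hy1
    · rw [hw0]; exact zero_mem_seqTangent hy2
  · have hr : 0 < ‖((u, w) : _ × _)‖ := norm_pos_iff.2 h0
    set r := ‖((u, w) : _ × _)‖ with hrdef
    have hd1 : ‖r⁻¹ • ((u, w) : _ × _)‖ = 1 := by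
      rw [norm_smul, Real.norm_eq_abs, abs_inv, abs_of_pos hr, ← hrdef, inv_mul_cancel₀ hr.ne']
    have hdT := seqTangent_smul hw (inv_pos.2 hr)
    have hic' := hic _ hd1
    simp only [FuzzyInnerCalmStarDirAt, ConvFromDir] at hic'
    rcases hic' with hcon | ⟨κ, hκ, y, hyΩ, ⟨t, vs, ht, ht0, hvs, hyeq⟩, x, pb, hxΞ, hbd⟩
    · exact absurd hdT hcon
    · have hnorm : ∀ k, ‖y k - (xb, zb)‖ = t k * ‖vs k‖ := fun k => by
        rw [hyeq k, add_sub_cancel_left, norm_smul, Real.norm_eq_abs, abs_of_pos (ht k)]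
      have hbd' : ∀ k, ‖x k - pb‖ ≤ κ * (t k * ‖vs k‖) := fun k => by
        rw [← hnorm k]; exact hbd k
      have hvsnorm : Tendsto (fun k => ‖vs k‖) atTop (𝓝 ‖r⁻¹ • ((u, w) : _ × _)‖) := hvs.norm
      have hzero : Tendsto (fun k => κ * (t k * ‖vs k‖)) atTop (𝓝 0) := by
        have := (ht0.mul hvsnorm).const_mul κ
        simpa using this
      have hxlim : Tendsto x atTop (𝓝 pb) := by
        rw [tendsto_iff_norm_sub_tendsto_zero]
        exact squeeze_zero (fun k => norm_nonneg _) hbd' hzero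
      have hylim : Tendsto y atTop (𝓝 (xb, zb)) := by
        have h : Tendsto (fun k => (xb, zb) + t k • vs k) atTop
            (𝓝 ((xb, zb) + (0 : ℝ) • (r⁻¹ • ((u, w) : _ × _)))) :=
          tendsto_const_nhds.add (ht0.smul hvs)
        simp only [zero_smul, add_zero] at h
        exact h.congr (fun k => (hyeq k).symm)
      have hy1lim : Tendsto (fun k => (y k).1) atTop (𝓝 xb) :=
        (continuous_fst.tendsto _).comp hylim
      have hy2lim : Tendsto (fun k => (y k).2) atTop (𝓝 zb) :=
        (continuous_snd.tendsto _).comp hylim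
      have hpb1 : pb ∈ S1 xb := by
        refine h1.mem_of_tendsto (hy1lim.prodMk_nhds hxlim)
          (Filter.Eventually.of_forall fun k => ?_)
        exact (hxΞ k).1
      have hpb2 : zb ∈ S2 pb := by
        refine h2.mem_of_tendsto (hxlim.prodMk_nhds hy2lim)
          (Filter.Eventually.of_forall fun k => ?_)
        exact (hxΞ k).2
      obtain ⟨C, hC⟩ := isBounded_iff_forall_norm_le.1 (Metric.isBounded_range_of_tendsto vs hvs)
      have hC' : ∀ k, ‖vs k‖ ≤ C := fun k => hC _ ⟨k, rfl⟩
      set q : ℕ → EuclideanSpace ℝ (Fin m) := fun k => (t k)⁻¹ • (x k - pb) with hq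
      have hqbd : ∀ k, q k ∈ Metric.closedBall (0 : EuclideanSpace ℝ (Fin m)) (κ * C) := by
        intro k
        rw [Metric.mem_closedBall, dist_zero_right]
        calc ‖q k‖ = (t k)⁻¹ * ‖x k - pb‖ := by
              rw [hq]; simp only []
              rw [norm_smul, Real.norm_eq_abs, abs_of_pos (inv_pos.2 (ht k))]
          _ ≤ (t k)⁻¹ * (κ * (t k * ‖vs k‖)) := by
              exact mul_le_mul_of_nonneg_left (hbd' k) (inv_pos.2 (ht k)).le
          _ = κ * ‖vs k‖ := by
              rw [show (t k)⁻¹ * (κ * (t k * ‖vs k‖)) = κ * ‖vs k‖ * ((t k)⁻¹ * t k) by ring,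
                inv_mul_cancel₀ (ht k).ne', mul_one]
          _ ≤ κ * C := mul_le_mul_of_nonneg_left (hC' k) hκ.le
      obtain ⟨v', -, φ, hφ, hqφ⟩ :=
        tendsto_subseq_of_bounded Metric.isBounded_closedBall hqbd
      have htφ : Tendsto (t ∘ φ) atTop (𝓝 0) := ht0.comp hφ.tendsto_atTop
      have hvsφ : Tendsto (vs ∘ φ) atTop (𝓝 (r⁻¹ • ((u, w) : _ × _))) :=
        hvs.comp hφ.tendsto_atTop
      have key : ∀ k, pb + t (φ k) • q (φ k) = x (φ k) := by
        intro k
        rw [hq]; simp only []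
        rw [smul_smul, mul_inv_cancel₀ (ht (φ k)).ne', one_smul, add_sub_cancel]
      have keyx : ∀ k, (y k).1 = xb + t k • (vs k).1 := fun k => by rw [hyeq k]; rfl
      have keyz : ∀ k, (y k).2 = zb + t k • (vs k).2 := fun k => by rw [hyeq k]; rfl
      have tan1 : ((r⁻¹ • u, v') : _ × _) ∈
          SeqTangent {p : EuclideanSpace ℝ (Fin n) × EuclideanSpace ℝ (Fin m) |
            p.2 ∈ S1 p.1} (xb, pb) := by
        refine ⟨t ∘ φ, fun k => ((vs (φ k)).1, q (φ k)), fun k => ht _, htφ, ?_, fun k => ?_⟩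
        · exact (((continuous_fst.tendsto _).comp hvsφ).prodMk_nhds hqφ)
        · show pb + (t ∘ φ) k • q (φ k) ∈ S1 (xb + (t ∘ φ) k • (vs (φ k)).1)
          rw [Function.comp_apply, key k, ← keyx (φ k)]
          exact (hxΞ (φ k)).1
      have tan2 : ((v', r⁻¹ • w) : _ × _) ∈
          SeqTangent {p : EuclideanSpace ℝ (Fin m) × EuclideanSpace ℝ (Fin s) |
            p.2 ∈ S2 p.1} (pb, zb) := by
        refine ⟨t ∘ φ, fun k => (q (φ k), (vs (φ k)).2), fun k => ht _, htφ, ?_, fun k => ?_⟩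
        · exact (hqφ.prodMk_nhds ((continuous_snd.tendsto _).comp hvsφ))
        · show zb + (t ∘ φ) k • (vs (φ k)).2 ∈ S2 (pb + (t ∘ φ) k • q (φ k))
          rw [Function.comp_apply, key k, ← keyz (φ k)]
          exact (hxΞ (φ k)).2
      refine ⟨pb, hpb1, hpb2, r • v', ?_, ?_⟩
      · have e : r • ((r⁻¹ • u, v') : _ × _) = ((u, r • v') : _ × _) := by
          rw [Prod.smul_mk, smul_inv_smul₀ hr.ne']
        exact e ▸ seqTangent_smul tan1 hr
      · have e : r • ((v', r⁻¹ • w) : _ × _) = ((r • v', w) : _ × _) := by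
          rw [Prod.smul_mk, smul_inv_smul₀ hr.ne']
        exact e ▸ seqTangent_smul tan2 hr
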